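/- arXiv:2202.03921 — 2 statements merged into one kernel-verified Lean document; each statement's English description precedes it below -/
import Mathlib

section
/- Let e be an integer with e ∉ {−1, 0, 1}, and let α ∈ Sₙ be a permutation without fixed points (α.support is all of Fin n), with order w = orderOf α, such that any two distinct cycle lengths of α are coprime (for all a ≠ b in α.cycleType, gcd(a, b) = 1). Assume that for every cycle length a of α: (i) gcd(a, eᵃ − 1) = 1 (gcd in ℤ), and (ii) for every prime p with p ∣ eʷ − 1 and p ∤ e − 1 (divisibility in ℤ), the number of cycles of α of length a is at most p − 1. Then a permutation y ∈ Sₙ is a solution of the power conjugate equation (e*α) if and only if y^(e−1) = 1 (integer power) and α ∘ y = y ∘ α. -/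
open Finset in
lemma stmt15_geom_split (E : ℤ) (a b : ℕ) :
    (∑ i ∈ Finset.range (a * b), E ^ i) =
      (∑ i ∈ Finset.range a, E ^ i) * (∑ i ∈ Finset.range b, (E ^ a) ^ i) := by
  induction b with
  | zero => simp
  | succ b ih =>
    rw [Nat.mul_succ, Finset.sum_range_add, ih, Finset.sum_range_succ, mul_add]
    congr 1
    rw [Finset.sum_mul]
    refine Finset.sum_congr rfl fun i _ => ?_
    rw [← pow_mul, ← pow_add, Nat.add_comm]

lemma stmt15_dvd_pow_sub_one {p E : ℤ} (h : p ∣ E - 1) (k : ℕ) : p ∣ E ^ k - 1 :=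
  h.trans ⟨∑ i ∈ Finset.range k, E ^ i, by rw [← mul_geom_sum]⟩

lemma stmt15_dvd_geom_sum_sub {p E : ℤ} (h : p ∣ E - 1) (k : ℕ) :
    p ∣ (∑ i ∈ Finset.range k, E ^ i) - k := by
  have h1 : (∑ i ∈ Finset.range k, E ^ i) - (k : ℤ) = ∑ i ∈ Finset.range k, (E ^ i - 1) := by
    rw [Finset.sum_sub_distrib]
    simp
  rw [h1]
  exact Finset.dvd_sum fun i _ => stmt15_dvd_pow_sub_one h i

lemma stmt15_dvd_geom_sum {p E : ℤ} (h : p ∣ E - 1) (k : ℕ) (hk : p ∣ (k : ℤ)) :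
    p ∣ ∑ i ∈ Finset.range k, E ^ i := by
  have h2 := (stmt15_dvd_geom_sum_sub h k).add hk
  simpa using h2

lemma stmt15_pow_dvd_geom_sum {p : ℕ} {E : ℤ} (h : (p : ℤ) ∣ E - 1) (M : ℕ) :
    (p : ℤ) ^ M ∣ ∑ i ∈ Finset.range (p ^ M), E ^ i := by
  induction M with
  | zero => simp
  | succ M ih =>
    have hr : p ^ (M + 1) = p ^ M * p := pow_succ p M
    rw [hr, stmt15_geom_split, pow_succ]
    exact mul_dvd_mul ih (stmt15_dvd_geom_sum (stmt15_dvd_pow_sub_one h _) p dvd_rfl)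

lemma stmt15_gcd_pow_eq_one {p : ℕ} (hp : p.Prime) (j : ℕ) {A : ℤ} (h : ¬ (p : ℤ) ∣ A) :
    Int.gcd ((p : ℤ) ^ j) A = 1 := by
  have h1 : ¬ p ∣ A.natAbs := fun hd => h (Int.natCast_dvd.2 hd)
  have h2 : Nat.Coprime (p ^ j) A.natAbs := ((Nat.Prime.coprime_iff_not_dvd hp).2 h1).pow_left _
  rw [Int.gcd_def, Int.natAbs_pow, Int.natAbs_natCast]
  exact h2

lemma stmt15_main_contra {n : ℕ} (e : ℤ)
    (α : Equiv.Perm (Fin n)) (hfix : α.support = Finset.univ)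
    (w : ℕ) (hw : w = orderOf α)
    (hcop : ∀ a ∈ α.cycleType, ∀ b ∈ α.cycleType, a ≠ b → Nat.gcd a b = 1)
    (hgcd : ∀ a ∈ α.cycleType, Int.gcd (a : ℤ) (e ^ a - 1) = 1)
    (hmult : ∀ a ∈ α.cycleType, ∀ p : ℕ, p.Prime →
      ((p : ℤ) ∣ e ^ w - 1) → ¬ ((p : ℤ) ∣ e - 1) →
      α.cycleType.count a ≤ p - 1)
    (z : Equiv.Perm (Fin n)) (hz : α * z * α⁻¹ = z ^ e)
    (p : ℕ) (hp : p.Prime) (j : ℕ) (hj : 1 ≤ j)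
    (hordz : orderOf z = p ^ j)
    (hpw : (p : ℤ) ∣ e ^ w - 1)
    (hjnot : ¬ ((p : ℤ) ^ j ∣ e - 1)) : False := by
  classical
  set q : ℕ := p ^ j with hq_def
  have hq1 : 1 < q := Nat.one_lt_pow (by omega) hp.one_lt
  -- find a point x whose z-orbit has size exactly q
  have hqmem : q ∈ z.cycleType := by
    by_contra hq
    have hall : ∀ L ∈ z.cycleType, L ∣ p ^ (j - 1) := by
      intro L hL
      have hdvd : L ∣ p ^ j := by
        have h1 : L ∣ z.cycleType.lcm := Multiset.dvd_lcm hL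
        rwa [z.lcm_cycleType, hordz] at h1
      obtain ⟨i, hi, rfl⟩ := (Nat.dvd_prime_pow hp).1 hdvd
      have hij : i ≠ j := by
        intro hij; subst hij; rw [← hq_def] at hL; exact hq hL
      exact pow_dvd_pow p (by omega)
    have h2 : z.cycleType.lcm ∣ p ^ (j - 1) := Multiset.lcm_dvd.2 hall
    rw [z.lcm_cycleType, hordz] at h2
    have := Nat.le_of_dvd (pow_pos hp.pos _) h2
    have := Nat.pow_lt_pow_right hp.one_lt (show j - 1 < j by omega)
    omega
  rw [Equiv.Perm.cycleType_def] at hqmem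
  obtain ⟨c, hcmem, hccard⟩ := Multiset.mem_map.1 hqmem
  have hcmem' : c ∈ z.cycleFactorsFinset := hcmem
  have hccard' : c.support.card = q := hccard
  obtain ⟨x, hx⟩ := Finset.card_pos.1 (by rw [hccard']; omega)
  have hcx : c = z.cycleOf x := Equiv.Perm.cycle_is_cycleOf hx hcmem'
  have hcard : (z.cycleOf x).support.card = q := by rw [← hcx]; exact hccard'
  have hxc : x ∈ (z.cycleOf x).support := hcx ▸ hx
  -- stabilizer of x under powers of z
  have hstab : ∀ u : ℤ, (z ^ u) x = x ↔ (q : ℤ) ∣ u := by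
    intro u
    have h1 := (z.isCycleOn_support_cycleOf x).zpow_apply_eq hxc (n := u)
    rwa [hcard] at h1
  have hz_shift : ∀ (A B : ℤ) (Q : Fin n), (z ^ A) ((z ^ B) Q) = (z ^ (A + B)) Q := by
    intro A B Q; rw [← Equiv.Perm.mul_apply, ← zpow_add]
  have hkey : ∀ A B : ℤ, ((z ^ A) x = (z ^ B) x ↔ (q : ℤ) ∣ A - B) := by
    intro A B
    constructor
    · intro h
      have h2 := congrArg (⇑(z ^ (-B))) h
      rw [hz_shift, hz_shift, neg_add_cancel, neg_add_eq_sub, zpow_zero] at h2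
      exact (hstab _).1 (by simpa using h2)
    · intro h
      have h2 := congrArg (⇑(z ^ B)) ((hstab _).2 h)
      rwa [hz_shift, add_sub_cancel] at h2
  -- conjugation relations
  have hzmul : ∀ u : ℤ, α * z ^ u = z ^ (e * u) * α := by
    intro u
    have h1 : α * z ^ u * α⁻¹ = z ^ (e * u) := by
      have h2 := (map_zpow (MulAut.conj α) z u).symm
      simp only [MulAut.conj_apply] at h2
      rw [hz, ← zpow_mul] at h2
      exact h2.symm
    rw [← h1]
    group
  have happ : ∀ (u : ℤ) (Q : Fin n), α ((z ^ u) Q) = (z ^ (e * u)) (α Q) := by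
    intro u Q
    rw [← Equiv.Perm.mul_apply, hzmul u, Equiv.Perm.mul_apply]
  have hL2 : ∀ (k : ℕ) (u : ℤ) (Q : Fin n),
      (α ^ k) ((z ^ u) Q) = (z ^ (u * e ^ k)) ((α ^ k) Q) := by
    intro k
    induction k with
    | zero => intro u Q; simp
    | succ k ih =>
      intro u Q
      have h1 : α ^ (k + 1) = α ^ k * α := pow_succ α k
      rw [h1, Equiv.Perm.mul_apply, Equiv.Perm.mul_apply, happ u Q, ih (e * u) (α Q)]
      congr 1
      push_cast
      ring
  -- the block-period t and shift s
  have hex : ∃ k, 0 < k ∧ ∃ u : ℤ, (α ^ k) x = (z ^ u) x :=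
    ⟨w, by rw [hw]; exact orderOf_pos α, 0, by rw [hw, pow_orderOf_eq_one]; simp⟩
  set t := Nat.find hex with ht_def
  obtain ⟨htpos, s, hts⟩ := Nat.find_spec hex
  -- geometric sums of E = e ^ t
  obtain ⟨E, hE_def⟩ : ∃ E : ℤ, E = e ^ t := ⟨_, rfl⟩
  obtain ⟨S, hS_def⟩ : ∃ S : ℕ → ℤ, S = fun k => ∑ i ∈ Finset.range k, E ^ i := ⟨_, rfl⟩
  have hL1 : ∀ k : ℕ, (α ^ (t * k)) x = (z ^ (s * S k)) x := by
    intro k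
    induction k with
    | zero => simp [hS_def]
    | succ k ih =>
      have h1 : α ^ (t * (k + 1)) = α ^ (t * k) * α ^ t := by
        rw [← pow_add, Nat.mul_succ]
      rw [h1, Equiv.Perm.mul_apply, hts, hL2 (t * k) s x, ih, hz_shift]
      have hEk : e ^ (t * k) = E ^ k := by rw [hE_def, ← pow_mul]
      have hsum : s * e ^ (t * k) + s * S k = s * S (k + 1) := by
        rw [hEk]
        simp only [hS_def, Finset.sum_range_succ]
        ring
      rw [hsum]
  have htdvd : ∀ k : ℕ, (∃ u : ℤ, (α ^ k) x = (z ^ u) x) → t ∣ k := by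
    rintro k ⟨u, hu⟩
    rcases Nat.eq_zero_or_pos (k % t) with h0 | hpos
    · omega
    · exfalso
      have hk : k % t + t * (k / t) = k := Nat.mod_add_div k t
      have h2 : (α ^ k) x = (α ^ (k % t)) ((α ^ (t * (k / t))) x) := by
        rw [← Equiv.Perm.mul_apply, ← pow_add, hk]
      rw [h2, hL1 (k / t), hL2 (k % t) (s * S (k / t)) x] at hu
      have h3 := congrArg (⇑(z ^ (-(s * S (k / t) * e ^ (k % t))))) hu
      rw [hz_shift, neg_add_cancel, zpow_zero, hz_shift] at h3
      simp only [Equiv.Perm.coe_one, id_eq] at h3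
      exact Nat.find_min hex (Nat.mod_lt k htpos) ⟨hpos, _, h3⟩
  -- cycle lengths of points
  have hplen : ∀ P : Fin n,
      (∀ k : ℕ, ((α ^ k) P = P ↔ (α.cycleOf P).support.card ∣ k)) ∧
        (α.cycleOf P).support.card ∈ α.cycleType := by
    intro P
    have hPs : P ∈ α.support := by rw [hfix]; exact Finset.mem_univ P
    have hPc : P ∈ (α.cycleOf P).support :=
      Equiv.Perm.mem_support_cycleOf_iff.2 ⟨Equiv.Perm.SameCycle.refl _ _, hPs⟩
    refine ⟨fun k => (α.isCycleOn_support_cycleOf P).pow_apply_eq hPc, ?_⟩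
    rw [Equiv.Perm.cycleType_def]
    exact Multiset.mem_map.2 ⟨_, Equiv.Perm.cycleOf_mem_cycleFactorsFinset_iff.2 hPs, rfl⟩
  set cLen : Fin n → ℕ := fun P => (α.cycleOf P).support.card with hcLen_def
  -- t divides every cycle length of a point in the z-orbit of x
  have hC1 : ∀ u : ℤ, t ∣ cLen ((z ^ u) x) := by
    intro u
    have h1 : (α ^ cLen ((z ^ u) x)) ((z ^ u) x) = (z ^ u) x :=
      ((hplen ((z ^ u) x)).1 _).2 dvd_rfl
    rw [hL2] at h1
    have h3 := congrArg (⇑(z ^ (-(u * e ^ cLen ((z ^ u) x))))) h1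
    rw [hz_shift, neg_add_cancel, zpow_zero, hz_shift] at h3
    simp only [Equiv.Perm.coe_one, id_eq] at h3
    exact htdvd _ ⟨_, h3⟩
  have hC2 : ∀ (u : ℤ) (k : ℕ),
      ((α ^ (t * k)) ((z ^ u) x) = (z ^ u) x ↔ (q : ℤ) ∣ S k * ((E - 1) * u + s)) := by
    intro u k
    have hcomp : (α ^ (t * k)) ((z ^ u) x) = (z ^ (u * e ^ (t * k) + s * S k)) x := by
      rw [hL2, hL1, hz_shift, add_comm]
    rw [hcomp, hkey]
    have hgsm : S k * (E - 1) = E ^ k - 1 := by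
      rw [hS_def]; exact geom_sum_mul E k
    have hEk : e ^ (t * k) = E ^ k := by rw [hE_def, ← pow_mul]
    have hid : u * e ^ (t * k) + s * S k - u = S k * ((E - 1) * u + s) := by
      rw [hEk]
      linear_combination (-u) * hgsm
    rw [hid]
  have htpos' : 0 < t := htpos
  have hqcast : ((q : ℕ) : ℤ) = (p : ℤ) ^ j := by rw [hq_def]; push_cast; ring
  have hS1 : S 1 = 1 := by rw [hS_def]; simp
  have hfixt : ∀ u : ℤ, ((α ^ t) ((z ^ u) x) = (z ^ u) x ↔ (q : ℤ) ∣ (E - 1) * u + s) := by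
    intro u
    have h1 := hC2 u 1
    rwa [mul_one, hS1, one_mul] at h1
  have hponele := hp.one_lt
  have hpdvd1 : ∀ {c' : ℕ}, c' ∈ α.cycleType → (p : ℤ) ∣ (c' : ℤ) →
      (p : ℤ) ∣ e ^ c' - 1 → False := by
    intro c' hmem h1 h2
    have h3 : (p : ℤ) ∣ (Int.gcd (c' : ℤ) (e ^ c' - 1) : ℤ) := Int.dvd_coe_gcd h1 h2
    rw [hgcd c' hmem] at h3
    have := Int.le_of_dvd one_pos h3
    omega
  by_cases hA : (p : ℤ) ∣ E - 1
  · -- Case B : E ≡ 1 mod p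
    have hSq : (q : ℤ) ∣ S q := by
      rw [hS_def, hqcast]
      simp only [hq_def]
      exact stmt15_pow_dvd_geom_sum hA j
    have hcdvd : ∀ u : ℤ, cLen ((z ^ u) x) ∣ t * q := fun u =>
      ((hplen _).1 _).1 ((hC2 u q).2 (dvd_mul_of_dvd_left hSq _))
    by_cases hB2 : ∀ u : ℤ, cLen ((z ^ u) x) = t
    · -- Case B2 : every cycle length in the block equals t
      have hall : ∀ u : ℤ, (q : ℤ) ∣ (E - 1) * u + s := by
        intro u
        exact (hfixt u).1 (((hplen _).1 _).2 (dvd_of_eq (hB2 u)))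
      have hqs : (q : ℤ) ∣ s := by simpa using hall 0
      have hqE : (q : ℤ) ∣ E - 1 := by
        have h1 := dvd_sub (hall 1) hqs
        simpa using h1
      have htmem : t ∈ α.cycleType := by
        have h1 := (hplen ((z ^ (0 : ℤ)) x)).2
        rwa [show (α.cycleOf ((z ^ (0 : ℤ)) x)).support.card = cLen ((z ^ (0 : ℤ)) x) from rfl,
          hB2 0] at h1
      by_cases hpe : (p : ℤ) ∣ e - 1
      · -- Case B2a
        have hpt : ¬ p ∣ t := by
          intro hpt
          exact hpdvd1 htmem (Int.natCast_dvd_natCast.2 hpt) (stmt15_dvd_pow_sub_one hpe t)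
        have hSt : ¬ (p : ℤ) ∣ ∑ i ∈ Finset.range t, e ^ i := by
          intro hd
          have h1 := dvd_sub hd (stmt15_dvd_geom_sum_sub hpe t)
          simp only [sub_sub_cancel] at h1
          exact hpt (Int.natCast_dvd_natCast.1 h1)
        have hqprod : (q : ℤ) ∣ (e - 1) * (∑ i ∈ Finset.range t, e ^ i) := by
          have hfact : E - 1 = (e - 1) * (∑ i ∈ Finset.range t, e ^ i) := by
            rw [hE_def, ← mul_geom_sum]
          rw [← hfact]
          exact hqE
        have hcopr : Int.gcd ((q : ℕ) : ℤ) (∑ i ∈ Finset.range t, e ^ i) = 1 := by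
          rw [hqcast]
          exact stmt15_gcd_pow_eq_one hp j hSt
        have hfin := Int.dvd_of_dvd_mul_left_of_gcd_one hqprod hcopr
        rw [hqcast] at hfin
        exact hjnot hfin
      · -- Case B2b : counting cycles of length t
        have hinj : Set.InjOn (fun u : ℕ => α.cycleOf ((z ^ (u : ℤ)) x)) (Finset.range q) := by
          intro u hu v hv huv
          simp only at huv
          have hPsv : (z ^ (v : ℤ)) x ∈ α.support := by rw [hfix]; exact Finset.mem_univ _
          have hvmem : (z ^ (v : ℤ)) x ∈ (α.cycleOf ((z ^ (v : ℤ)) x)).support :=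
            Equiv.Perm.mem_support_cycleOf_iff.2 ⟨Equiv.Perm.SameCycle.refl _ _, hPsv⟩
          rw [← huv] at hvmem
          have hsame : α.SameCycle ((z ^ (u : ℤ)) x) ((z ^ (v : ℤ)) x) :=
            (Equiv.Perm.mem_support_cycleOf_iff.1 hvmem).1
          obtain ⟨k, hklt, hk⟩ := hsame.exists_pow_eq'
          have hdec : (α ^ (k % t)) ((z ^ (u : ℤ)) x) = (z ^ (v : ℤ)) x := by
            have hmd : k % t + t * (k / t) = k := Nat.mod_add_div k t
            have hfixmul : (α ^ (t * (k / t))) ((z ^ (u : ℤ)) x) = (z ^ (u : ℤ)) x :=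
              ((hplen _).1 _).2 ((dvd_of_eq (hB2 (u : ℤ))).trans (dvd_mul_right t _))
            have h1 : (α ^ k) ((z ^ (u : ℤ)) x)
                = (α ^ (k % t)) ((α ^ (t * (k / t))) ((z ^ (u : ℤ)) x)) := by
              conv_lhs => rw [← hmd]
              rw [pow_add, Equiv.Perm.mul_apply]
            rw [h1, hfixmul] at hk
            exact hk
          have hdec2 := hdec
          rw [hL2] at hdec2
          have h3 := congrArg (⇑(z ^ (-((u : ℤ) * e ^ (k % t))))) hdec2
          rw [hz_shift, neg_add_cancel, zpow_zero, hz_shift] at h3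
          simp only [Equiv.Perm.coe_one, id_eq] at h3
          have htr : t ∣ k % t := htdvd _ ⟨_, h3⟩
          have hr0 : k % t = 0 := Nat.eq_zero_of_dvd_of_lt htr (Nat.mod_lt k htpos')
          rw [hr0, pow_zero] at hdec
          simp only [Equiv.Perm.coe_one, id_eq, Equiv.Perm.one_apply] at hdec
          have hdvd : ((q : ℕ) : ℤ) ∣ (u : ℤ) - (v : ℤ) := (hkey _ _).1 hdec
          have hu' : u < q := Finset.mem_range.1 (Finset.mem_coe.1 hu)
          have hv' : v < q := Finset.mem_range.1 (Finset.mem_coe.1 hv)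
          have h9 := Int.eq_zero_of_dvd_of_natAbs_lt_natAbs hdvd (by omega)
          omega
        have hcount : q ≤ α.cycleType.count t := by
          have hFsub : (Finset.range q).image (fun u : ℕ => α.cycleOf ((z ^ (u : ℤ)) x))
              ⊆ α.cycleFactorsFinset := by
            intro cc hcc
            rw [Finset.mem_image] at hcc
            obtain ⟨u, _, rfl⟩ := hcc
            exact Equiv.Perm.cycleOf_mem_cycleFactorsFinset_iff.2
              (by rw [hfix]; exact Finset.mem_univ _)
          have hFcard : ((Finset.range q).image
              (fun u : ℕ => α.cycleOf ((z ^ (u : ℤ)) x))).card = q := by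
            rw [Finset.card_image_of_injOn hinj, Finset.card_range]
          rw [Equiv.Perm.cycleType_def, Multiset.count_map]
          have hle : ((Finset.range q).image (fun u : ℕ => α.cycleOf ((z ^ (u : ℤ)) x))).val
              ≤ α.cycleFactorsFinset.val := Finset.val_le_iff.2 hFsub
          have hflt : Multiset.filter (fun a => t = (Finset.card ∘ Equiv.Perm.support) a)
              ((Finset.range q).image (fun u : ℕ => α.cycleOf ((z ^ (u : ℤ)) x))).val
              = ((Finset.range q).image (fun u : ℕ => α.cycleOf ((z ^ (u : ℤ)) x))).val := by
            rw [Multiset.filter_eq_self]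
            intro a ha
            have ha' : a ∈ (Finset.range q).image (fun u : ℕ => α.cycleOf ((z ^ (u : ℤ)) x)) :=
              Finset.mem_def.2 ha
            rw [Finset.mem_image] at ha'
            obtain ⟨u, _, rfl⟩ := ha'
            exact (hB2 (u : ℤ)).symm
          calc q = ((Finset.range q).image
              (fun u : ℕ => α.cycleOf ((z ^ (u : ℤ)) x))).val.card := hFcard.symm
          _ = (Multiset.filter (fun a => t = (Finset.card ∘ Equiv.Perm.support) a)
              ((Finset.range q).image (fun u : ℕ => α.cycleOf ((z ^ (u : ℤ)) x))).val).card := by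
              rw [hflt]
          _ ≤ _ := Multiset.card_le_card (Multiset.filter_le_filter _ hle)
        have hcnt := hmult t htmem p hp hpw hpe
        have hpq : p ≤ q := by
          rw [hq_def]
          exact Nat.le_self_pow (by omega) p
        omega
    · -- Case B1
      push_neg at hB2
      obtain ⟨u, hu⟩ := hB2
      have h1 : t ∣ cLen ((z ^ u) x) := hC1 u
      have h2 : cLen ((z ^ u) x) ∣ t * q := hcdvd u
      have hk : cLen ((z ^ u) x) = t * (cLen ((z ^ u) x) / t) := (Nat.mul_div_cancel' h1).symm
      have hkd : cLen ((z ^ u) x) / t ∣ q := by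
        refine (Nat.mul_dvd_mul_iff_left htpos').1 ?_
        rw [← hk]
        exact h2
      have hkne : cLen ((z ^ u) x) / t ≠ 1 := by
        intro h3
        rw [h3, mul_one] at hk
        exact hu hk
      have hpk : p ∣ cLen ((z ^ u) x) / t := by
        obtain ⟨i, hij2, hky⟩ := (Nat.dvd_prime_pow hp).1 (hq_def ▸ hkd)
        have hine : i ≠ 0 := by
          intro h0
          rw [h0, pow_zero] at hky
          exact hkne hky
        rw [hky]
        exact dvd_pow_self p hine
      have hpc : (p : ℤ) ∣ (cLen ((z ^ u) x) : ℤ) :=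
        Int.natCast_dvd_natCast.2 (hpk.trans (Nat.div_dvd_of_dvd h1))
      have hec : (p : ℤ) ∣ e ^ cLen ((z ^ u) x) - 1 := by
        have h3 : (p : ℤ) ∣ E ^ (cLen ((z ^ u) x) / t) - 1 := stmt15_dvd_pow_sub_one hA _
        have h4 : E ^ (cLen ((z ^ u) x) / t) = e ^ cLen ((z ^ u) x) := by
          rw [hE_def, ← pow_mul, ← hk]
        rwa [h4] at h3
      exact hpdvd1 (hplen _).2 hpc hec
  · -- Case A : E ≢ 1 mod p
    have hcopr : Int.gcd ((q : ℕ) : ℤ) (E - 1) = 1 := by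
      rw [hqcast]
      exact stmt15_gcd_pow_eq_one hp j hA
    obtain ⟨a', b', hab⟩ := Int.isCoprime_iff_gcd_eq_one.2 hcopr
    have hv : (q : ℤ) ∣ (E - 1) * b' - 1 := ⟨-a', by linear_combination hab⟩
    have h0 : (q : ℤ) ∣ (E - 1) * (-(b' * s)) + s := by
      have h1 : (E - 1) * (-(b' * s)) + s = (-s) * ((E - 1) * b' - 1) := by ring
      rw [h1]
      exact hv.mul_left _
    have hc0t : cLen ((z ^ (-(b' * s))) x) = t :=
      Nat.dvd_antisymm (((hplen _).1 t).1 ((hfixt _).2 h0)) (hC1 _)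
    have htmem : t ∈ α.cycleType := hc0t ▸ (hplen _).2
    have hne : cLen ((z ^ (b' * ((p : ℤ) ^ (j - 1) - s))) x) ≠ t := by
      intro hceq
      have h4 : (α ^ t) ((z ^ (b' * ((p : ℤ) ^ (j - 1) - s))) x)
          = (z ^ (b' * ((p : ℤ) ^ (j - 1) - s))) x :=
        ((hplen _).1 t).2 (hceq ▸ dvd_rfl)
      have h5 := (hfixt _).1 h4
      have h3 : (q : ℤ) ∣ (E - 1) * (b' * ((p : ℤ) ^ (j - 1) - s)) + s - (p : ℤ) ^ (j - 1) := by
        have h6 : (E - 1) * (b' * ((p : ℤ) ^ (j - 1) - s)) + s - (p : ℤ) ^ (j - 1)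
            = ((p : ℤ) ^ (j - 1) - s) * ((E - 1) * b' - 1) := by ring
        rw [h6]
        exact hv.mul_left _
      have h6 : (q : ℤ) ∣ (p : ℤ) ^ (j - 1) := by
        have h7 := dvd_sub h5 h3
        simpa using h7
      rw [hqcast] at h6
      have h7 : p ^ j ∣ p ^ (j - 1) := by
        have h8 : ((p ^ j : ℕ) : ℤ) ∣ ((p ^ (j - 1) : ℕ) : ℤ) := by push_cast; exact h6
        exact_mod_cast h8
      have h9 := Nat.le_of_dvd (pow_pos hp.pos _) h7
      have h10 := Nat.pow_lt_pow_right hp.one_lt (show j - 1 < j by omega)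
      omega
    have hg := hcop _ ((hplen ((z ^ (b' * ((p : ℤ) ^ (j - 1) - s))) x)).2) t htmem hne
    have hdt : t ∣ Nat.gcd (cLen ((z ^ (b' * ((p : ℤ) ^ (j - 1) - s))) x)) t :=
      Nat.dvd_gcd (hC1 _) dvd_rfl
    rw [hg] at hdt
    have ht1 : t = 1 := Nat.dvd_one.1 hdt
    have := Equiv.Perm.two_le_of_mem_cycleType (ht1 ▸ htmem)
    omega


/-- Theorem 2.14: let `α ∈ Sₙ` have no fixed points and order `w`, with
pairwise coprime distinct cycle lengths. Assume every cycle length `a` of `α` satisfies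
`gcd(a, e ^ a - 1) = 1` and that the number of cycles of length `a` is at most `p - 1`
for every prime `p` dividing `e ^ w - 1` but not `e - 1`. Then `y` solves `(e*α)` iff
`y ^ (e - 1) = 1` and `y` commutes with `α`. -/
theorem stmt_15 (n : ℕ) (e : ℤ) (he : e ∉ ({-1, 0, 1} : Set ℤ))
    (α : Equiv.Perm (Fin n)) (hfix : α.support = Finset.univ)
    (w : ℕ) (hw : w = orderOf α)
    (hcop : ∀ a ∈ α.cycleType, ∀ b ∈ α.cycleType, a ≠ b → Nat.gcd a b = 1)
    (hgcd : ∀ a ∈ α.cycleType, Int.gcd (a : ℤ) (e ^ a - 1) = 1)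
    (hmult : ∀ a ∈ α.cycleType, ∀ p : ℕ, p.Prime →
      ((p : ℤ) ∣ e ^ w - 1) → ¬ ((p : ℤ) ∣ e - 1) →
      α.cycleType.count a ≤ p - 1) :
    ∀ y : Equiv.Perm (Fin n),
      α * y * α⁻¹ = y ^ e ↔ (y ^ (e - 1) = 1 ∧ α * y = y * α) := by
  intro y
  constructor
  · intro hsol
    classical
    have hne1 : e ≠ 1 := by
      simp only [Set.mem_insert_iff, Set.mem_singleton_iff] at he
      tauto
    set m := orderOf y with hm_def
    have hm0 : m ≠ 0 := (orderOf_pos y).ne'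
    have hconj1 : (MulAut.conj α) y = y ^ e := by
      rw [MulAut.conj_apply, hsol]
    have hconjk : ∀ k : ℕ, (MulAut.conj (α ^ k)) y = y ^ (e ^ k) := by
      intro k
      induction k with
      | zero => simp
      | succ k ih =>
        have h1 : α ^ (k + 1) = α * α ^ k := by rw [pow_succ']
        have h2 : (MulAut.conj (α * α ^ k)) y = (MulAut.conj α) ((MulAut.conj (α ^ k)) y) := by
          rw [map_mul]
          rfl
        rw [h1, h2, ih, map_zpow, hconj1, ← zpow_mul]
        congr 1
        rw [pow_succ]
        ring
    have hyw : y ^ (e ^ w - 1) = 1 := by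
      have h1 := hconjk w
      have ha : α ^ w = 1 := by rw [hw]; exact pow_orderOf_eq_one α
      rw [ha] at h1
      simp only [map_one, MulAut.one_apply] at h1
      rw [zpow_sub, ← h1, zpow_one, mul_inv_cancel]
    have hmw : (m : ℤ) ∣ e ^ w - 1 := orderOf_dvd_iff_zpow_eq_one.2 hyw
    have hmdvd : (m : ℤ) ∣ e - 1 := by
      have hN0 : (e - 1).natAbs ≠ 0 := by
        intro h
        rw [Int.natAbs_eq_zero] at h
        exact hne1 (by omega)
      have hnat : m ∣ (e - 1).natAbs := by
        rw [← Nat.factorization_le_iff_dvd hm0 hN0]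
        refine Finsupp.le_def.2 fun pp => ?_
        by_cases hpp : pp.Prime
        · rcases Nat.eq_zero_or_pos (m.factorization pp) with hj0 | hjpos
          · omega
          · by_contra hgt
            push_neg at hgt
            have hnotdvd : ¬ ((pp : ℤ) ^ (m.factorization pp) ∣ e - 1) := by
              intro hd
              have h5 : pp ^ (m.factorization pp) ∣ (e - 1).natAbs :=
                Int.natCast_dvd.1 (by push_cast; exact hd)
              rw [Nat.Prime.pow_dvd_iff_le_factorization hpp hN0] at h5
              omega
            have hpjm : pp ^ (m.factorization pp) ∣ m := Nat.ordProj_dvd m pp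
            have hordz : orderOf (y ^ (m / pp ^ (m.factorization pp)))
                = pp ^ (m.factorization pp) := by
              rw [orderOf_pow, ← hm_def,
                Nat.gcd_eq_right (Nat.div_dvd_of_dvd hpjm)]
              exact Nat.div_div_self hpjm hm0
            have hzconj : α * (y ^ (m / pp ^ (m.factorization pp))) * α⁻¹
                = (y ^ (m / pp ^ (m.factorization pp))) ^ e := by
              have h4 : α * (y ^ (m / pp ^ (m.factorization pp))) * α⁻¹
                  = (α * y * α⁻¹) ^ (m / pp ^ (m.factorization pp)) := by
                have h6 := map_pow (MulAut.conj α) y (m / pp ^ (m.factorization pp))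
                simpa [MulAut.conj_apply] using h6.symm
              rw [h4, hsol, ← zpow_natCast, ← zpow_mul, mul_comm, zpow_mul, zpow_natCast]
            have hpdvdw : (pp : ℤ) ∣ e ^ w - 1 := by
              refine dvd_trans ?_ hmw
              exact_mod_cast Int.natCast_dvd_natCast.2
                (dvd_trans (dvd_pow_self pp (by omega)) hpjm)
            exact stmt15_main_contra e α hfix w hw hcop hgcd hmult _ hzconj pp hpp
              (m.factorization pp) hjpos hordz hpdvdw hnotdvd
        · rw [Nat.factorization_eq_zero_of_not_prime m hpp]
          omega
      exact Int.natCast_dvd.2 hnat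
    have h1 : y ^ (e - 1) = 1 := orderOf_dvd_iff_zpow_eq_one.1 hmdvd
    have hye : y ^ e = y := by
      have h3 : y ^ (e - 1 + 1) = y ^ (e - 1) * y := zpow_add_one y (e - 1)
      rw [show e - 1 + 1 = e by ring] at h3
      rw [h3, h1, one_mul]
    refine ⟨h1, ?_⟩
    have h2 : α * y * α⁻¹ = y := by rw [hsol, hye]
    calc α * y = (α * y * α⁻¹) * α := by group
    _ = y * α := by rw [h2]
  · rintro ⟨h1, h2⟩
    have hye : y ^ e = y := by
      have h3 : y ^ (e - 1 + 1) = y ^ (e - 1) * y := zpow_add_one y (e - 1)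
      rw [show e - 1 + 1 = e by ring] at h3
      rw [h3, h1, one_mul]
    rw [hye, h2]
    group
end

section
/- Let α₁, α₂ ∈ Sₙ. The equation α₁ ∘ x ∘ α₂ ∘ x = 1 has a solution x ∈ Sₙ if and only if for every integer i ≥ 1 the number of cycles of length 2i in α₁⁻¹ ∘ α₂ is even (equivalently, if and only if α₁⁻¹ ∘ α₂ has a square root in Sₙ: there exists z ∈ Sₙ with z² = α₁⁻¹ ∘ α₂, namely z = x ∘ α₂). -/
open Equiv Equiv.Perm

namespace Stmt18Aux

variable {α : Type*} [DecidableEq α] [Fintype α]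

/-- The effect of squaring on a single cycle length. -/
def sqf (ℓ : ℕ) : Multiset ℕ :=
  if ℓ % 2 = 1 then {ℓ} else if ℓ = 2 then 0 else {ℓ / 2, ℓ / 2}

lemma cycleType_sq_cycle {c : Perm α} (hc : c.IsCycle) :
    (c ^ 2).cycleType = sqf c.support.card := by
  set ℓ := c.support.card with hℓ
  have horder : orderOf c = ℓ := hc.orderOf
  have hℓ2 : 2 ≤ ℓ := hc.two_le_card_support
  by_cases hl2 : ℓ = 2
  · have h2 : c ^ 2 = 1 := by
      have horder2 : orderOf c = 2 := by omega
      rw [← horder2]; exact pow_orderOf_eq_one c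
    rw [h2, cycleType_one]
    simp [sqf, hl2]
  -- main case : ℓ ≠ 2
  have hndvd : ¬ ℓ ∣ 2 := by
    intro h
    have := Nat.le_of_dvd (by norm_num) h
    omega
  have hsupp : (c ^ 2).support = c.support := by
    rw [hc.support_pow_eq_iff, horder]; exact hndvd
  set m : ℕ := if ℓ % 2 = 1 then ℓ else ℓ / 2 with hm
  have hm_pos : 0 < m := by
    rw [hm]; split
    · omega
    · omega
  have hdvd2m : ℓ ∣ 2 * m := by
    rw [hm]; split
    · exact ⟨2, by ring⟩
    · next heven =>
      have h2 : 2 * (ℓ / 2) = ℓ := by omega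
      rw [h2]
  have hdvd_of : ∀ a : ℕ, ℓ ∣ 2 * a → m ∣ a := by
    intro a ha
    rw [hm]; split
    · next hodd =>
      have hcop : Nat.Coprime ℓ 2 :=
        Nat.coprime_two_right.mpr (Nat.odd_iff.mpr hodd)
      exact hcop.dvd_of_dvd_mul_left ha
    · next heven =>
      have h2 : 2 * (ℓ / 2) = ℓ := by omega
      obtain ⟨k, hk⟩ := ha
      refine ⟨k, ?_⟩
      have h3 : 2 * (ℓ / 2 * k) = 2 * a := by
        rw [← mul_assoc, h2, ← hk]
      omega
  -- every entry of (c^2).cycleType equals m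
  have hentry : ∀ a ∈ (c ^ 2).cycleType, a = m := by
    intro a ha
    rw [cycleType_def, Multiset.mem_map] at ha
    obtain ⟨d, hd, rfl⟩ := ha
    rw [Finset.mem_val] at hd
    have hdc : d.IsCycle ∧ ∀ x ∈ d.support, d x = (c ^ 2) x :=
      (mem_cycleFactorsFinset_iff).mp hd
    obtain ⟨x, hx⟩ := hdc.1.nonempty_support
    have hx2 : (c ^ 2) x ≠ x := by
      rw [← hdc.2 x hx]; exact mem_support.mp hx
    have hdeq : d = (c ^ 2).cycleOf x := cycle_is_cycleOf hx hd
    have hcyc : ((c ^ 2).cycleOf x).IsCycle := isCycle_cycleOf _ hx2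
    have hcard : d.support.card = orderOf ((c ^ 2).cycleOf x) := by
      rw [hdeq]; exact hcyc.orderOf.symm
    have hcx : c x ≠ x := by
      intro h
      apply hx2
      simp [pow_succ, pow_zero, h]
    -- divisibility characterization
    have hiter : ∀ k : ℕ, ((c ^ 2) ^ k) x = x ↔ orderOf ((c ^ 2).cycleOf x) ∣ k := by
      intro k
      rw [orderOf_dvd_iff_pow_eq_one,
        hcyc.pow_eq_one_iff' (by rwa [cycleOf_apply_self]),
        cycleOf_pow_apply_self]
    have hciter : ∀ j : ℕ, (c ^ j) x = x ↔ ℓ ∣ j := by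
      intro j
      rw [← horder, orderOf_dvd_iff_pow_eq_one, hc.pow_eq_one_iff' hcx]
    set a := orderOf ((c ^ 2).cycleOf x) with hadef
    have key : ∀ k : ℕ, a ∣ k ↔ ℓ ∣ 2 * k := by
      intro k
      rw [← hiter, ← pow_mul, hciter]
    have h1 : a ∣ m := (key m).mpr hdvd2m
    have h2 : m ∣ a := hdvd_of a ((key a).mp dvd_rfl)
    show (Finset.card ∘ Equiv.Perm.support) d = m
    simp only [Function.comp_apply]
    rw [hcard]
    exact Nat.dvd_antisymm h1 h2
  have hrep : (c ^ 2).cycleType = Multiset.replicate (Multiset.card (c ^ 2).cycleType) m :=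
    Multiset.eq_replicate_card.mpr hentry
  have hsum : (c ^ 2).cycleType.sum = ℓ := by
    rw [sum_cycleType, hsupp]
  rw [hrep] at hsum ⊢
  rw [Multiset.sum_replicate, smul_eq_mul] at hsum
  rw [sqf]
  by_cases hodd : ℓ % 2 = 1
  · have hmℓ : m = ℓ := by rw [hm, if_pos hodd]
    have : Multiset.card (c ^ 2).cycleType = 1 := by
      rw [hmℓ] at hsum; nlinarith [hsum, hℓ2]
    rw [this, hmℓ, if_pos hodd]
    rfl
  · have hmℓ : m = ℓ / 2 := by rw [hm, if_neg hodd]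
    have h2m : ℓ = 2 * m := by omega
    have : Multiset.card (c ^ 2).cycleType = 2 := by nlinarith [hsum, hm_pos]
    rw [this, if_neg hodd, if_neg hl2, hmℓ]
    rfl

lemma cycleType_sq (z : Perm α) :
    (z ^ 2).cycleType = z.cycleType.bind sqf := by
  induction z using cycle_induction_on with
  | base_one => simp
  | base_cycles c hc => rw [hc.cycleType, cycleType_sq_cycle hc]; simp [Multiset.singleton_bind]
  | induction_disjoint σ τ hd hσ ihσ ihτ =>
    have hcomm : Commute σ τ := hd.commute
    rw [hcomm.mul_pow, Equiv.Perm.Disjoint.cycleType_mul (hd.pow_disjoint_pow 2 2), hd.cycleType_mul,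
      Multiset.add_bind, ihσ, ihτ]

/-- A multiset all of whose multiplicities are even is a doubling. -/
lemma exists_half (s : Multiset ℕ) (h : ∀ a : ℕ, Even (s.count a)) :
    ∃ D : Multiset ℕ, s = D + D := by
  induction s using Multiset.strongInductionOn with
  | ih s ih =>
    rcases Multiset.empty_or_exists_mem s with rfl | ⟨a, ha⟩
    · exact ⟨0, rfl⟩
    · have hca : 2 ≤ s.count a := by
        obtain ⟨k, hk⟩ := h a
        have h1 : 1 ≤ s.count a := Multiset.one_le_count_iff_mem.mpr ha
        omega
      set t := s - {a, a} with ht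
      have hle : ({a, a} : Multiset ℕ) ≤ s := by
        rw [Multiset.le_iff_count]
        intro b
        by_cases hba : b = a
        · subst hba; simpa using hca
        · simp [Multiset.count_cons, Multiset.count_singleton, hba]
      have hst : s = t + {a, a} := (tsub_add_cancel_of_le hle).symm
      have hcount : ∀ b, t.count b = s.count b - (if b = a then 2 else 0) := by
        intro b
        rw [ht, Multiset.count_sub]
        by_cases hba : b = a
        · subst hba; simp
        · simp [Multiset.count_cons, Multiset.count_singleton, hba]
      have hteven : ∀ b, Even (t.count b) := by
        intro b
        rw [hcount b]
        by_cases hba : b = a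
        · subst hba
          obtain ⟨k, hk⟩ := h b
          rw [if_pos rfl]
          exact ⟨k - 1, by omega⟩
        · rw [if_neg hba, Nat.sub_zero]; exact h b
      have hlt : t < s := by
        apply lt_of_le_of_ne (Multiset.sub_le_self _ _)
        intro hts
        have h2 := hcount a
        have hts' : t = s := ht.trans hts
        rw [hts', if_pos rfl] at h2
        omega
      obtain ⟨D, hD⟩ := ih t hlt hteven
      refine ⟨a ::ₘ D, ?_⟩
      rw [hst, hD]
      ext b
      by_cases hba : b = a <;>
        simp [Multiset.count_add, Multiset.count_cons, Multiset.count_singleton, hba]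

lemma double_map_sum (s : Multiset ℕ) :
    (s.map (fun x => 2 * x)).sum = s.sum + s.sum := by
  induction s using Multiset.induction_on with
  | empty => simp
  | cons a t ih => simp only [Multiset.map_cons, Multiset.sum_cons, ih]; ring

lemma sqf_count_even (ℓ k : ℕ) : Even ((sqf ℓ).count (2 * k)) := by
  rw [sqf]
  split
  · next hodd =>
    rw [Multiset.count_singleton]
    split
    · next h => exfalso; omega
    · exact Even.zero
  · split
    · simp
    · rcases eq_or_ne (2 * k) (ℓ / 2) with h | h <;>
        simp [Multiset.insert_eq_cons, Multiset.count_cons, Multiset.count_singleton, h]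

/-- The square-root criterion. -/
lemma isSquare_iff (π : Perm α) :
    (∃ z : Perm α, z ^ 2 = π) ↔
      ∀ i : ℕ, 1 ≤ i → Even (π.cycleType.count (2 * i)) := by
  constructor
  · rintro ⟨z, rfl⟩ i _
    rw [cycleType_sq, Multiset.count_bind]
    rw [even_iff_two_dvd]
    apply Multiset.dvd_sum
    intro x hx
    rw [Multiset.mem_map] at hx
    obtain ⟨ℓ, _, rfl⟩ := hx
    exact (sqf_count_even ℓ i).two_dvd
  · intro hyp
    set ct := π.cycleType with hct
    set O := ct.filter (fun ℓ => ℓ % 2 = 1) with hO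
    set E := ct.filter (fun ℓ => ¬ ℓ % 2 = 1) with hEdef
    have hOE : O + E = ct := Multiset.filter_add_not _ _
    have hE_even : ∀ a : ℕ, Even (E.count a) := by
      intro a
      rw [hEdef, Multiset.count_filter]
      split
      · next hpar =>
        by_cases hmem : a ∈ ct
        · have h2 : 2 ≤ a := two_le_of_mem_cycleType (hct ▸ hmem)
          have ha : a = 2 * (a / 2) := by omega
          rw [ha]
          exact hyp (a / 2) (by omega)
        · simp [Multiset.count_eq_zero_of_notMem hmem]
      · exact Even.zero
    obtain ⟨D, hD⟩ := exists_half E hE_even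
    have hDmem : ∀ x ∈ D, 2 ≤ x := by
      intro x hx
      have hxE : x ∈ E := by rw [hD]; exact Multiset.mem_add.mpr (Or.inl hx)
      exact two_le_of_mem_cycleType (hct ▸ (Multiset.mem_filter.mp hxE).1)
    set M := O + D.map (fun x => 2 * x) with hM
    have hMsum : M.sum = ct.sum := by
      have h1 : ct.sum = O.sum + E.sum := by rw [← hOE, Multiset.sum_add]
      have h2 : E.sum = D.sum + D.sum := by rw [hD, Multiset.sum_add]
      have h3 : M.sum = O.sum + (D.map (fun x => 2 * x)).sum := by
        rw [hM, Multiset.sum_add]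
      rw [h3, double_map_sum, h1, h2]
    have hw : ∃ w : Perm α, w.cycleType = M := by
      rw [exists_with_cycleType_iff]
      constructor
      · rw [hMsum, hct, sum_cycleType]
        exact π.support.card_le_univ
      · intro a haM
        rcases Multiset.mem_add.mp haM with haO | haD
        · exact two_le_of_mem_cycleType (hct ▸ (Multiset.mem_filter.mp haO).1)
        · obtain ⟨x, hx, rfl⟩ := Multiset.mem_map.mp haD
          have := hDmem x hx
          omega
    obtain ⟨w, hwM⟩ := hw
    have hw2 : (w ^ 2).cycleType = ct := by
      rw [cycleType_sq, hwM, Multiset.add_bind]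
      have hObind : O.bind sqf = O := by
        have h1 : O.bind sqf = O.bind (fun a => ({a} : Multiset ℕ)) := by
          apply Multiset.bind_congr
          intro a haO
          have hodd : a % 2 = 1 := (Multiset.mem_filter.mp haO).2
          rw [sqf, if_pos hodd]
        rw [h1, Multiset.bind_singleton, Multiset.map_id']
      have hDbind : (D.map (fun x => 2 * x)).bind sqf = D + D := by
        rw [Multiset.bind_map]
        have h1 : D.bind (fun x => sqf (2 * x))
            = D.bind (fun x => ({x} : Multiset ℕ) + {x}) := by
          apply Multiset.bind_congr
          intro x hx
          have h2 : 2 ≤ x := hDmem x hx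
          rw [sqf, if_neg (by omega), if_neg (by omega)]
          have : 2 * x / 2 = x := by omega
          rw [this]
          rfl
        rw [h1, Multiset.bind_add, Multiset.bind_singleton, Multiset.map_id']
      rw [hObind, hDbind, ← hD]
      all_goals exact hOE
    have hconj : IsConj (w ^ 2) π := isConj_of_cycleType_eq (by rw [hw2, hct])
    obtain ⟨c, hc⟩ := isConj_iff.mp hconj
    refine ⟨c * w * c⁻¹, ?_⟩
    rw [← hc, pow_two, pow_two]
    simp [mul_assoc]

end Stmt18Aux

/-- the quadratic equation `α₁ ∘ x ∘ α₂ ∘ x = 1` has a solution in `Sₙ`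
iff for every `i ≥ 1` the number of cycles of length `2i` in `α₁⁻¹ ∘ α₂` is even,
equivalently iff `α₁⁻¹ ∘ α₂` has a square root in `Sₙ`. -/
theorem stmt_18 (n : ℕ) (α₁ α₂ : Equiv.Perm (Fin n)) :
    ((∃ x : Equiv.Perm (Fin n), α₁ * x * α₂ * x = 1) ↔
      ∀ i : ℕ, 1 ≤ i → Even ((α₁⁻¹ * α₂).cycleType.count (2 * i))) ∧
    ((∃ x : Equiv.Perm (Fin n), α₁ * x * α₂ * x = 1) ↔
      ∃ z : Equiv.Perm (Fin n), z ^ 2 = α₁⁻¹ * α₂) := by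
  have hxz : (∃ x : Equiv.Perm (Fin n), α₁ * x * α₂ * x = 1) ↔
      ∃ z : Equiv.Perm (Fin n), z ^ 2 = α₁⁻¹ * α₂ := by
    constructor
    · rintro ⟨x, hx⟩
      refine ⟨x * α₂, ?_⟩
      have h1 : x * α₂ * x = α₁⁻¹ := by
        have h2 := congrArg (fun g => α₁⁻¹ * g) hx
        simpa [mul_assoc] using h2
      rw [pow_two, ← mul_assoc, h1]
    · rintro ⟨z, hz⟩
      refine ⟨z * α₂⁻¹, ?_⟩
      have h1 : α₁ * (z * α₂⁻¹) * α₂ * (z * α₂⁻¹) = α₁ * z ^ 2 * α₂⁻¹ := by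
        rw [pow_two]
        simp [mul_assoc]
      rw [h1, hz]
      simp [mul_assoc]
  exact ⟨hxz.trans (Stmt18Aux.isSquare_iff _), hxz⟩
end
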